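/- arXiv:1909.01257 — 3 statements merged into one kernel-verified Lean document; each statement's English description precedes it below -/
import Mathlib

section
/- Define f_0 = 1 and f_n = (mn+1)^{n-1} for n ≥ 1. Then the exponential generating function f(x) = Σ_{n≥0} f_n x^n / n! satisfies the functional equation f = e^{x f^m}. -/
section AbelPolynomial
open Polynomial Finset

noncomputable def abelP (m n : ℕ) : Polynomial ℚ :=
  if n = 0 then 1 else X * (X + ((m * n : ℕ) : Polynomial ℚ)) ^ (n - 1)

lemma abelP_zero (m : ℕ) : abelP m 0 = 1 := rfl

lemma abelP_succ (m n : ℕ) :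
    abelP m (n + 1) = X * (X + ((m * (n+1) : ℕ) : Polynomial ℚ)) ^ n := by
  simp [abelP]

lemma derivative_abelP (m n : ℕ) :
    derivative (abelP m (n + 1)) = ((n+1 : ℕ) : Polynomial ℚ) * (abelP m n).comp (X + ((m : ℕ) : Polynomial ℚ)) := by
  cases n with
  | zero => simp [abelP_succ, abelP_zero]
  | succ k =>
    rw [abelP_succ, abelP_succ]
    simp only [derivative_mul, derivative_X, derivative_pow, derivative_add,
      derivative_natCast, add_zero, one_mul, mul_comp, X_comp, add_comp, pow_comp,
      natCast_comp, Nat.add_sub_cancel]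
    push_cast [C_add, C_1, C_eq_natCast]
    ring

lemma abelP_eval_zero (m n : ℕ) : (abelP m n).eval 0 = if n = 0 then 1 else 0 := by
  cases n with
  | zero => simp [abelP_zero]
  | succ k => simp [abelP_succ]

lemma abel_binomial (m : ℕ) : ∀ n : ℕ, ∀ y : ℚ,
    ∑ k ∈ range (n+1),
        C ((n.choose k : ℚ) * (abelP m (n-k)).eval y) * abelP m k
      = (abelP m n).comp (X + C y) := by
  intro n
  induction n with
  | zero => intro y; simp [abelP_zero]
  | succ n ih =>
    intro y
    set L := ∑ k ∈ range (n+1+1),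
        C (((n+1).choose k : ℚ) * (abelP m (n+1-k)).eval y) * abelP m k with hL
    set R := (abelP m (n+1)).comp (X + C y) with hR
    have ihc : ∑ k ∈ range (n+1),
        C ((n.choose k : ℚ) * (abelP m (n-k)).eval y) * (abelP m k).comp (X + ((m : ℕ) : Polynomial ℚ))
        = (abelP m n).comp (X + C y + ((m : ℕ) : Polynomial ℚ)) := by
      have := congrArg (fun p => p.comp (X + ((m : ℕ) : Polynomial ℚ))) (ih y)
      simpa [comp_assoc, add_right_comm] using this
    have hR' : derivative R = ((n+1 : ℕ) : Polynomial ℚ) *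
        (abelP m n).comp (X + C y + ((m : ℕ) : Polynomial ℚ)) := by
      rw [hR, derivative_comp, derivative_abelP]
      simp [mul_comp, natCast_comp, comp_assoc]
    have hL' : derivative L = ((n+1 : ℕ) : Polynomial ℚ) *
        (abelP m n).comp (X + C y + ((m : ℕ) : Polynomial ℚ)) := by
      rw [hL, derivative_sum, Finset.sum_range_succ']
      simp only [derivative_mul, derivative_C, zero_mul, zero_add]
      simp only [abelP_zero, derivative_one, mul_zero, add_zero]
      have key : ∀ k, C (((n+1).choose (k+1) : ℚ) * (abelP m (n+1-(k+1))).eval y) * derivative (abelP m (k+1))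
          = ((n+1 : ℕ) : Polynomial ℚ) *
            (C ((n.choose k : ℚ) * (abelP m (n-k)).eval y) * (abelP m k).comp (X + ((m : ℕ) : Polynomial ℚ))) := by
        intro k
        rw [derivative_abelP]
        have hc : ((n+1).choose (k+1) : ℚ) * ((k+1 : ℕ) : ℚ) = ((n+1 : ℕ) : ℚ) * (n.choose k : ℚ) := by
          rw [← Nat.cast_mul, ← Nat.cast_mul, Nat.add_one_mul_choose_eq]
        have hnk : (n+1-(k+1)) = n - k := by omega
        rw [hnk]
        calc C (((n+1).choose (k+1) : ℚ) * (abelP m (n-k)).eval y) *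
              (((k+1 : ℕ) : Polynomial ℚ) * (abelP m k).comp (X + ((m : ℕ) : Polynomial ℚ)))
            = C (((n+1).choose (k+1) : ℚ) * ((k+1 : ℕ) : ℚ)) * C ((abelP m (n-k)).eval y) *
              (abelP m k).comp (X + ((m : ℕ) : Polynomial ℚ)) := by
              simp only [C_mul, C_eq_natCast]; ring
          _ = _ := by rw [hc]; simp only [C_mul, C_eq_natCast]; ring
      rw [Finset.sum_congr rfl (fun k _ => key k), ← Finset.mul_sum, ihc]
    have hd : derivative (L - R) = 0 := by rw [derivative_sub, hL', hR', sub_self]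
    have h0 : L.eval 0 = R.eval 0 := by
      rw [hL, hR, eval_comp]
      simp only [eval_finset_sum, eval_mul, eval_C, abelP_eval_zero, eval_add, eval_X, eval_C]
      rw [Finset.sum_eq_single 0]
      · simp
      · intro b _ hb
        simp [hb]
      · intro h; simp at h
    have h2 := eq_C_of_derivative_eq_zero hd
    rw [coeff_zero_eq_eval_zero, eval_sub, h0, sub_self, map_zero, sub_eq_zero] at h2
    exact h2

lemma abelP_eval_succ (m n : ℕ) (q : ℚ) :
    (abelP m (n+1)).eval q = q * (q + m * (n+1)) ^ n := by
  simp [abelP_succ]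

end AbelPolynomial

open PowerSeries Polynomial Finset

lemma abel_eval (m n : ℕ) (x y : ℚ) :
    ∑ k ∈ range (n+1),
        (n.choose k : ℚ) * (abelP m k).eval x * (abelP m (n-k)).eval y
      = (abelP m n).eval (x + y) := by
  have := congrArg (fun p : Polynomial ℚ => p.eval x) (abel_binomial m n y)
  simpa [eval_finset_sum, eval_comp, mul_comm, mul_assoc, mul_left_comm] using this

/-- The numbers `f_0 = 1` and `f_n = (mn+1)^(n-1)` for `n ≥ 1` (the number of regions
of the extended Shi arrangement `Shiᵐ` of type `A_{n-1}`). -/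
def shiRegions (m n : ℕ) : ℕ := if n = 0 then 1 else (m * n + 1) ^ (n - 1)

/-- The exponential generating function `f(x) = Σ_{n ≥ 0} f_n xⁿ/n!`. -/
noncomputable def shiEGF (m : ℕ) : PowerSeries ℚ :=
  PowerSeries.mk fun n => (shiRegions m n : ℚ) / (n.factorial : ℚ)

lemma coeff_shiEGF (m n : ℕ) :
    (PowerSeries.coeff n) (shiEGF m) = (abelP m n).eval 1 / (n.factorial : ℚ) := by
  rw [shiEGF, PowerSeries.coeff_mk]
  congr 1
  cases n with
  | zero => simp [shiRegions, abelP_zero]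
  | succ k => rw [abelP_eval_succ, shiRegions]; push_cast; simp; ring

lemma coeff_shiEGF_pow (m t : ℕ) : ∀ n : ℕ,
    (PowerSeries.coeff n) ((shiEGF m) ^ t)
      = (abelP m n).eval (t : ℚ) / (n.factorial : ℚ) := by
  induction t with
  | zero =>
    intro n
    rw [pow_zero, PowerSeries.coeff_one]
    cases n with
    | zero => simp [abelP_zero]
    | succ k => simp [abelP_eval_succ]
  | succ t ih =>
    intro n
    rw [pow_succ, PowerSeries.coeff_mul, Finset.Nat.sum_antidiagonal_eq_sum_range_succ_mk]
    have key : ∀ k ∈ range (n+1),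
        (PowerSeries.coeff k) ((shiEGF m) ^ t) * (PowerSeries.coeff (n - k)) (shiEGF m)
          = (n.choose k : ℚ) * (abelP m k).eval (t : ℚ) * (abelP m (n-k)).eval 1
            / (n.factorial : ℚ) := by
      intro k hk
      have hkn : k ≤ n := Nat.lt_succ_iff.mp (Finset.mem_range.mp hk)
      rw [ih, coeff_shiEGF, Nat.cast_choose ℚ hkn]
      have h1 : (k.factorial : ℚ) ≠ 0 := Nat.cast_ne_zero.mpr k.factorial_ne_zero
      have h2 : ((n-k).factorial : ℚ) ≠ 0 := Nat.cast_ne_zero.mpr (n-k).factorial_ne_zero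
      have h3 : (n.factorial : ℚ) ≠ 0 := Nat.cast_ne_zero.mpr n.factorial_ne_zero
      field_simp
    rw [Finset.sum_congr rfl key, ← Finset.sum_div, abel_eval m n (t : ℚ) 1]
    push_cast
    ring_nf
lemma final_sum (m n : ℕ) (hn : 1 ≤ n) :
    ∑ j ∈ range (n+1), (n.choose j : ℚ) * (abelP m (n-j)).eval ((m*j : ℕ) : ℚ)
      = (abelP m n).eval 1 := by
  have hn1 : n - 1 + 1 = n := by omega
  set x : ℚ := ((m*n : ℕ) : ℚ) with hx
  -- reflect the sum
  rw [← Finset.sum_range_reflect]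
  have step1 : ∀ i ∈ range (n+1),
      (n.choose (n + 1 - 1 - i) : ℚ) * (abelP m (n - (n + 1 - 1 - i))).eval ((m*(n + 1 - 1 - i) : ℕ) : ℚ)
        = (n.choose i : ℚ) * (abelP m i).eval ((m*(n-i) : ℕ) : ℚ) := by
    intro i hi
    have hi' : i ≤ n := Nat.lt_succ_iff.mp (Finset.mem_range.mp hi)
    have e1 : n + 1 - 1 - i = n - i := by omega
    have e2 : n - (n - i) = i := by omega
    rw [e1, e2, Nat.choose_symm hi']
  rw [Finset.sum_congr rfl step1, Finset.sum_range_succ']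
  have step2 : ∀ i ∈ range n,
      (n.choose (i+1) : ℚ) * (abelP m (i+1)).eval ((m*(n-(i+1)) : ℕ) : ℚ)
        = ((n-1).choose (i+1) : ℚ) * x ^ (i+1) := by
    intro i hi
    have hi' : i + 1 ≤ n := Finset.mem_range.mp hi
    rw [abelP_eval_succ]
    have hq : ((m*(n-(i+1)) : ℕ) : ℚ) + (m : ℚ) * ((i : ℚ) + 1) = x := by
      have hnat : m*(n-(i+1)) + m*(i+1) = m*n := by
        rw [← Nat.mul_add]; congr 1; omega
      rw [hx, ← hnat]
      push_cast
      ring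
    have hcc : n.choose (i+1) * (n - (i+1)) = n * ((n-1).choose (i+1)) := by
      have h2 := Nat.add_one_mul_choose_eq (n-1) (i+1)
      simp only [Nat.succ_eq_add_one, hn1] at h2
      calc n.choose (i+1) * (n - (i+1)) = n.choose (i+1+1) * (i+1+1) :=
            (Nat.choose_succ_right_eq n (i+1)).symm
        _ = n * ((n-1).choose (i+1)) := by rw [← h2]
    rw [hq]
    have hcc' : (n.choose (i+1) : ℚ) * ((m*(n-(i+1)) : ℕ) : ℚ)
        = (m : ℚ) * (n : ℚ) * (((n-1).choose (i+1) : ℕ) : ℚ) := by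
      push_cast [Nat.cast_sub hi']
      have := congrArg (fun a : ℕ => (a : ℚ)) hcc
      push_cast [Nat.cast_sub hi'] at this
      nlinarith [this]
    calc (n.choose (i+1) : ℚ) * (((m*(n-(i+1)) : ℕ) : ℚ) * (x ^ i))
        = ((n.choose (i+1) : ℚ) * ((m*(n-(i+1)) : ℕ) : ℚ)) * x ^ i := by ring
      _ = ((n-1).choose (i+1) : ℚ) * (x * x ^ i) := by
          rw [hcc']; rw [hx]; push_cast; ring
      _ = ((n-1).choose (i+1) : ℚ) * x ^ (i+1) := by ring
  rw [Finset.sum_congr rfl step2]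
  -- the i = 0 term
  have h0 : (n.choose 0 : ℚ) * (abelP m 0).eval ((m*(n-0) : ℕ) : ℚ) = 1 := by
    simp [abelP_zero]
  rw [h0]
  -- right-hand side
  have hrhs : (abelP m n).eval 1 = (x + 1) ^ (n-1) := by
    obtain ⟨k, hk⟩ : ∃ k, n = k + 1 := ⟨n - 1, by omega⟩
    subst hk
    rw [abelP_eval_succ, hx]
    simp only [Nat.add_sub_cancel]
    push_cast
    ring
  have hn1' : range n = range ((n-1)+1) := by rw [hn1]
  rw [hrhs, add_pow]
  simp only [one_pow, mul_one]
  conv_rhs => rw [Finset.sum_range_succ']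
  simp only [pow_zero, Nat.choose_zero_right, Nat.cast_one, one_mul]
  congr 1
  conv_lhs => rw [hn1', Finset.sum_range_succ]
  rw [Nat.choose_succ_self]
  simp [mul_comm]

/-- The EGF `f` of the numbers `f_n = (mn+1)^{n-1}` satisfies `f = e^{x fᵐ}`, stated
coefficient-wise: since `(x fᵐ)^j` has order at least `j`, the `n`-th coefficient of
`e^{x fᵐ} = Σ_j (x fᵐ)^j / j!` equals that of the partial sum `Σ_{j ≤ n}`. -/
theorem shi_egf_functional_equation (m : ℕ) (hm : 1 ≤ m) :
    ∀ n : ℕ, (PowerSeries.coeff n) (shiEGF m)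
      = (PowerSeries.coeff n)
          (∑ j ∈ Finset.range (n + 1),
            ((j.factorial : ℚ)⁻¹) • (PowerSeries.X * (shiEGF m) ^ m) ^ j) := by
  intro n
  rw [map_sum]
  simp only [map_smul, smul_eq_mul]
  have key : ∀ j ∈ range (n+1),
      ((j.factorial : ℚ)⁻¹) * (PowerSeries.coeff n) ((PowerSeries.X * (shiEGF m) ^ m) ^ j)
        = (n.choose j : ℚ) * (abelP m (n-j)).eval ((m*j : ℕ) : ℚ) / (n.factorial : ℚ) := by
    intro j hj
    have hjn : j ≤ n := Nat.lt_succ_iff.mp (Finset.mem_range.mp hj)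
    rw [mul_pow, ← pow_mul, PowerSeries.coeff_X_pow_mul', if_pos hjn, coeff_shiEGF_pow,
      Nat.cast_choose ℚ hjn]
    have h1 : (j.factorial : ℚ) ≠ 0 := Nat.cast_ne_zero.mpr j.factorial_ne_zero
    have h2 : ((n-j).factorial : ℚ) ≠ 0 := Nat.cast_ne_zero.mpr (n-j).factorial_ne_zero
    have h3 : (n.factorial : ℚ) ≠ 0 := Nat.cast_ne_zero.mpr n.factorial_ne_zero
    field_simp
  rw [Finset.sum_congr rfl key, ← Finset.sum_div]
  rcases Nat.eq_zero_or_pos n with hn | hn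
  · subst hn
    simp [shiEGF, shiRegions, abelP_zero]
  · rw [final_sum m n hn, coeff_shiEGF]
end

section
/- An n-core partition never has both an addable box and a removable box of the same residue k, where the residue of the box in row i and column j is (j - i) mod n. -/
/-- The hook length of the box in row `i`, column `c` (both `0`-indexed) of the Young
diagram of the partition `l`. -/
noncomputable def hookLen (l : ℕ → ℕ) (i c : ℕ) : ℕ :=
  (l i - c) + Set.ncard {r : ℕ | i < r ∧ c < l r}

/-- `l` is a partition: weakly decreasing and eventually zero. -/
def IsPartition (l : ℕ → ℕ) : Prop := Antitone l ∧ ∃ N, ∀ i, N ≤ i → l i = 0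

/-- The last box of row `i` (in position `(i, l i - 1)`, `0`-indexed) is removable:
deleting it leaves the Young diagram of a partition. -/
def Removable (l : ℕ → ℕ) (i : ℕ) : Prop := 0 < l i ∧ l (i + 1) < l i

/-- A box can be added at the end of row `i` (in position `(i, l i)`, `0`-indexed):
adding it yields the Young diagram of a partition. -/
def Addable (l : ℕ → ℕ) (i : ℕ) : Prop := i = 0 ∨ l i < l (i - 1)

/-- The residue mod `n` of the box in row `i`, column `j` (`0`-indexed): `(j - i) mod n`. -/
def residue (n : ℕ) (i j : ℕ) : ℤ := ((j : ℤ) - (i : ℤ)) % (n : ℤ)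

/-- An `n`-core partition never has both an addable box and a removable box of the same
residue. -/
theorem n_core_no_addable_removable_same_residue (n : ℕ) (hn : 0 < n) (l : ℕ → ℕ)
    (hl : IsPartition l) (hcore : ∀ i c : ℕ, c < l i → ¬ (n ∣ hookLen l i c)) :
    ∀ i i' : ℕ, Removable l i → Addable l i' →
      residue n i (l i - 1) ≠ residue n i' (l i') := by
  rintro i i' ⟨hpos, hrem⟩ hadd hres
  have hanti := hl.1
  unfold residue at hres
  have hm : Int.ModEq n (((l i - 1 : ℕ) : ℤ) - (i : ℤ)) (((l i' : ℕ) : ℤ) - (i' : ℤ)) := hres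
  rcases lt_trichotomy i i' with h | h | h
  · -- i < i'
    have hi'0 : i' ≠ 0 := by omega
    have hadd' : l i' < l (i' - 1) := by
      rcases hadd with h0 | h0
      · omega
      · exact h0
    have hle : l (i' - 1) ≤ l i := hanti (by omega)
    have hci : l i' < l i := lt_of_lt_of_le hadd' hle
    apply hcore i (l i') hci
    have hset : {r : ℕ | i < r ∧ l i' < l r} = ↑(Finset.Ioo i i') := by
      ext r
      simp only [Finset.coe_Ioo, Set.mem_Ioo, Set.mem_setOf_eq]
      constructor
      · rintro ⟨h1, h2⟩
        refine ⟨h1, ?_⟩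
        by_contra hge
        push_neg at hge
        have := hanti hge
        omega
      · rintro ⟨h1, h2⟩
        exact ⟨h1, lt_of_lt_of_le hadd' (hanti (by omega))⟩
    have hcard : Set.ncard {r : ℕ | i < r ∧ l i' < l r} = i' - i - 1 := by
      rw [hset, Set.ncard_coe_finset, Nat.card_Ioo]
    unfold hookLen
    rw [hcard]
    have hd : (n : ℤ) ∣ (((l i - 1 : ℕ) : ℤ) - (i : ℤ)) - (((l i' : ℕ) : ℤ) - (i' : ℤ)) :=
      Int.ModEq.dvd hm.symm
    have heq : (((l i - l i') + (i' - i - 1) : ℕ) : ℤ)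
        = (((l i - 1 : ℕ) : ℤ) - (i : ℤ)) - (((l i' : ℕ) : ℤ) - (i' : ℤ)) := by omega
    have : (n : ℤ) ∣ (((l i - l i') + (i' - i - 1) : ℕ) : ℤ) := heq ▸ hd
    exact_mod_cast this
  · -- i = i'
    subst h
    have hd : (n : ℤ) ∣ (((l i : ℕ) : ℤ) - (i : ℤ)) - (((l i - 1 : ℕ) : ℤ) - (i : ℤ)) :=
      Int.ModEq.dvd hm
    have h1 : (((l i : ℕ) : ℤ) - (i : ℤ)) - (((l i - 1 : ℕ) : ℤ) - (i : ℤ)) = ((1 : ℕ) : ℤ) := by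
      omega
    rw [h1] at hd
    have hn1 : n = 1 := Nat.eq_one_of_dvd_one (by exact_mod_cast hd)
    exact hcore i (l i - 1) (by omega) (by simp [hn1])
  · -- i' < i
    have hle : l i ≤ l i' := hanti (by omega)
    have hci : l i - 1 < l i' := by omega
    apply hcore i' (l i - 1) hci
    have hset : {r : ℕ | i' < r ∧ l i - 1 < l r} = ↑(Finset.Ioc i' i) := by
      ext r
      simp only [Finset.coe_Ioc, Set.mem_Ioc, Set.mem_setOf_eq]
      constructor
      · rintro ⟨h1, h2⟩
        refine ⟨h1, ?_⟩
        by_contra hgt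
        push_neg at hgt
        have := hanti (show i + 1 ≤ r by omega)
        omega
      · rintro ⟨h1, h2⟩
        have := hanti h2
        omega
    have hcard : Set.ncard {r : ℕ | i' < r ∧ l i - 1 < l r} = i - i' := by
      rw [hset, Set.ncard_coe_finset, Nat.card_Ioc]
    unfold hookLen
    rw [hcard]
    have hd : (n : ℤ) ∣ (((l i' : ℕ) : ℤ) - (i' : ℤ)) - (((l i - 1 : ℕ) : ℤ) - (i : ℤ)) :=
      Int.ModEq.dvd hm
    have heq : (((l i' - (l i - 1)) + (i - i') : ℕ) : ℤ)
        = (((l i' : ℕ) : ℤ) - (i' : ℤ)) - (((l i - 1 : ℕ) : ℤ) - (i : ℤ)) := by omega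
    have : (n : ℤ) ∣ (((l i' - (l i - 1)) + (i - i') : ℕ) : ℤ) := heq ▸ hd
    exact_mod_cast this
end

section
/- The number of regions of a real hyperplane arrangement A in an n-dimensional vector space equals (-1)^n χ_A(-1), where χ_A is the characteristic polynomial of A. -/
open Classical

/-- `H` is an affine hyperplane in `ℝⁿ`: the level set of a nonzero linear functional. -/
def IsHyperplane (n : ℕ) (H : Set (Fin n → ℝ)) : Prop :=
  ∃ (f : (Fin n → ℝ) →ₗ[ℝ] ℝ) (c : ℝ), f ≠ 0 ∧ H = {x | f x = c}

/-- The intersection poset of the arrangement `A`: the nonempty intersections of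
subsets of `A` (the empty intersection giving the whole space), ordered by reverse
inclusion, so that `0̂` is the whole space. -/
def interPoset (n : ℕ) (A : Set (Set (Fin n → ℝ))) : Set (Set (Fin n → ℝ)) :=
  {t | t.Nonempty ∧ ∃ S ⊆ A, t = ⋂₀ S}

/-- The dimension of an element `t` of the intersection poset: the dimension of the
affine subspace `t`. -/
noncomputable def interDim (n : ℕ) (t : Set (Fin n → ℝ)) : ℕ :=
  Module.finrank ℝ (affineSpan ℝ t).direction


-- ### Auxiliary development ###

variable {n : ℕ}

abbrev ZasV (n : ℕ) := Fin n → ℝ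
abbrev ZasPr (n : ℕ) := ((ZasV n) →ₗ[ℝ] ℝ) × ℝ

def ZasH (p : ZasPr n) : Set (ZasV n) := {x | p.1 x = p.2}

def ZasCell (P S : Finset (ZasPr n)) : Set (ZasV n) :=
  {x | ∀ p ∈ P, if p ∈ S then p.2 < p.1 x else p.1 x < p.2}

noncomputable def ZasD (t : Set (ZasV n)) : ℕ :=
  Module.finrank ℝ (affineSpan ℝ t).direction

def ZasI (S : Finset (ZasPr n)) (E : Set (ZasV n)) : Set (ZasV n) :=
  (⋂ p ∈ S, ZasH p) ∩ E

noncomputable def ZasW (P : Finset (ZasPr n)) (E : Set (ZasV n)) : ℤ :=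
  ∑ S ∈ P.powerset, if (ZasI S E).Nonempty then (-1)^S.card * (-1)^(ZasD (ZasI S E)) else 0

noncomputable def ZasR (P : Finset (ZasPr n)) (E : Set (ZasV n)) : ℕ :=
  (P.powerset.filter (fun S => (ZasCell P S ∩ E).Nonempty)).card

lemma ZasCell_eq_biInter (P S : Finset (ZasPr n)) :
    ZasCell P S = ⋂ p ∈ P, {x | if p ∈ S then p.2 < p.1 x else p.1 x < p.2} := by
  ext x; simp [ZasCell]

lemma ZasCell_isOpen (P S : Finset (ZasPr n)) : IsOpen (ZasCell P S) := by
  rw [ZasCell_eq_biInter]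
  refine Set.Finite.isOpen_biInter P.finite_toSet (fun p _ => ?_)
  by_cases hp : p ∈ S <;> simp only [hp, if_true, if_false]
  · have : {x : ZasV n | p.2 < p.1 x} = p.1 ⁻¹' (Set.Ioi p.2) := rfl
    rw [this]; exact (p.1.continuous_of_finiteDimensional).isOpen_preimage _ isOpen_Ioi
  · have : {x : ZasV n | p.1 x < p.2} = p.1 ⁻¹' (Set.Iio p.2) := rfl
    rw [this]; exact (p.1.continuous_of_finiteDimensional).isOpen_preimage _ isOpen_Iio

lemma ZasCell_convex (P S : Finset (ZasPr n)) : Convex ℝ (ZasCell P S) := by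
  rw [ZasCell_eq_biInter]
  refine convex_iInter (fun p => convex_iInter (fun _ => ?_))
  by_cases hp : p ∈ S <;> simp only [hp, if_true, if_false]
  · exact convex_halfSpace_gt p.1.isLinear p.2
  · exact convex_halfSpace_lt p.1.isLinear p.2

lemma ZasCell_disjoint {P S T : Finset (ZasPr n)} (hS : S ⊆ P) (hT : T ⊆ P) (hST : S ≠ T) :
    ZasCell P S ∩ ZasCell P T = ∅ := by
  by_contra h
  obtain ⟨x, hxS, hxT⟩ := Set.nonempty_iff_ne_empty.2 h
  apply hST
  ext p
  constructor
  · intro hp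
    by_contra hpT
    have h1 := hxS p (hS hp); have h2 := hxT p (hS hp)
    rw [if_pos hp] at h1; rw [if_neg hpT] at h2; linarith
  · intro hp
    by_contra hpS
    have h1 := hxS p (hT hp); have h2 := hxT p (hT hp)
    rw [if_neg hpS] at h1; rw [if_pos hp] at h2; linarith

lemma ZasCell_mem_sign (P : Finset (ZasPr n)) (x : ZasV n) (hx : ∀ p ∈ P, p.1 x ≠ p.2) :
    x ∈ ZasCell P (P.filter (fun p => p.2 < p.1 x)) := by
  intro p hp
  by_cases h : p.2 < p.1 x
  · rw [if_pos (Finset.mem_filter.2 ⟨hp, h⟩)]; exact h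
  · have hnot : p ∉ P.filter (fun q => q.2 < q.1 x) := by
      simp only [Finset.mem_filter]; tauto
    rw [if_neg hnot]
    rcases lt_trichotomy (p.1 x) p.2 with h1 | h1 | h1
    · exact h1
    · exact absurd h1 (hx p hp)
    · exact absurd h1 h

lemma ZasCell_perturb {P S : Finset (ZasPr n)} {x : ZasV n} (hx : x ∈ ZasCell P S)
    (v : ZasV n) : ∃ ε : ℝ, 0 < ε ∧ ∀ t : ℝ, |t| ≤ ε → x + t • v ∈ ZasCell P S := by
  obtain ⟨δ, hδ, hball⟩ := Metric.isOpen_iff.1 (ZasCell_isOpen P S) x hx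
  refine ⟨δ / (2 * (‖v‖ + 1)), by positivity, fun t ht => ?_⟩
  apply hball
  rw [Metric.mem_ball, dist_eq_norm, add_sub_cancel_left, norm_smul]
  calc ‖t‖ * ‖v‖ ≤ (δ / (2 * (‖v‖ + 1))) * ‖v‖ := by
        apply mul_le_mul_of_nonneg_right _ (norm_nonneg v)
        rwa [Real.norm_eq_abs]
    _ < δ := by
        rw [div_mul_eq_mul_div, div_lt_iff₀ (by positivity)]
        nlinarith [norm_nonneg v]

-- the hyperplane as an affine subspace
noncomputable def ZasHsub (p : ZasPr n) : AffineSubspace ℝ (ZasV n) :=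
  AffineSubspace.comap p.1.toAffineMap (AffineSubspace.mk' p.2 (⊥ : Submodule ℝ ℝ))

lemma ZasHsub_coe (p : ZasPr n) : (ZasHsub p : Set (ZasV n)) = ZasH p := by
  ext x
  simp [ZasHsub, ZasH, AffineSubspace.mem_comap, AffineSubspace.mem_mk',
    vsub_eq_sub, sub_eq_zero]

lemma ZasD_coe (F : AffineSubspace ℝ (ZasV n)) :
    ZasD (F : Set (ZasV n)) = Module.finrank ℝ F.direction := by
  rw [ZasD, AffineSubspace.affineSpan_coe]

lemma ZasHsub_direction (p : ZasPr n) {x : ZasV n} (hx : x ∈ ZasHsub p) :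
    (ZasHsub p).direction = LinearMap.ker p.1 := by
  ext v
  rw [AffineSubspace.mem_direction_iff_eq_vsub ⟨x, hx⟩]
  have hmem : ∀ y : ZasV n, y ∈ ZasHsub p ↔ p.1 y = p.2 := by
    intro y
    have := ZasHsub_coe (n := n) p
    constructor
    · intro h; have : y ∈ (ZasHsub p : Set (ZasV n)) := h
      rwa [ZasHsub_coe] at this
    · intro h; have : y ∈ (ZasHsub p : Set (ZasV n)) := by rw [ZasHsub_coe]; exact h
      exact this
  constructor
  · rintro ⟨a, ha, b, hb, rfl⟩
    rw [LinearMap.mem_ker, vsub_eq_sub, map_sub, (hmem a).1 ha, (hmem b).1 hb, sub_self]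
  · intro hv
    refine ⟨v + x, ?_, x, hx, by simp [vsub_eq_sub]⟩
    rw [hmem, map_add, LinearMap.mem_ker.1 hv, zero_add, (hmem x).1 hx]

/-- The key dimension-drop lemma. -/
lemma ZasD_drop (E : AffineSubspace ℝ (ZasV n)) (p : ZasPr n)
    {x1 x2 : ZasV n} (hx1E : x1 ∈ E) (hx1H : x1 ∈ ZasHsub p)
    (hx2E : x2 ∈ E) (hx2H : p.1 x2 ≠ p.2) :
    Module.finrank ℝ (E ⊓ ZasHsub p).direction + 1 = Module.finrank ℝ E.direction := by
  have hdir : (E ⊓ ZasHsub p).direction = E.direction ⊓ LinearMap.ker p.1 := by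
    rw [AffineSubspace.direction_inf_of_mem hx1E hx1H, ZasHsub_direction p hx1H]
  set D := E.direction
  set g : D →ₗ[ℝ] ℝ := p.1.domRestrict D with hg
  have hker : LinearMap.ker g = Submodule.comap D.subtype (D ⊓ LinearMap.ker p.1) := by
    ext v
    simp [hg, LinearMap.mem_ker, Submodule.mem_comap, LinearMap.domRestrict_apply]
  have hx1c : p.1 x1 = p.2 := by
    have : x1 ∈ (ZasHsub p : Set (ZasV n)) := hx1H
    rw [ZasHsub_coe] at this; exact this
  have hw : (x2 - x1 : ZasV n) ∈ D := by
    have := AffineSubspace.vsub_mem_direction hx2E hx1E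
    rwa [vsub_eq_sub] at this
  have hgw : g ⟨x2 - x1, hw⟩ ≠ 0 := by
    simp only [hg, LinearMap.domRestrict_apply, map_sub]
    rw [hx1c]
    intro h; exact hx2H (by linarith [sub_eq_zero.1 h])
  have hrange : LinearMap.range g = ⊤ := by
    rw [LinearMap.range_eq_top]
    intro y
    set a := g ⟨x2 - x1, hw⟩
    exact ⟨(y / a) • ⟨x2 - x1, hw⟩, by rw [map_smul, smul_eq_mul, div_mul_cancel₀ _ hgw]⟩
  have hrank := LinearMap.finrank_range_add_finrank_ker g
  rw [hrange] at hrank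
  have h1 : Module.finrank ℝ (⊤ : Submodule ℝ ℝ) = 1 := by
    rw [finrank_top, Module.finrank_self]
  rw [h1] at hrank
  have hk : Module.finrank ℝ (LinearMap.ker g) =
      Module.finrank ℝ (E ⊓ ZasHsub p).direction := by
    rw [hker, hdir]
    exact (Submodule.comapSubtypeEquivOfLe inf_le_left).finrank_eq
  omega

-- cell splitting lemmas
lemma Zas_cell_insert_lt (p0 : ZasPr n) (P' S : Finset (ZasPr n)) (hp0 : p0 ∉ P') (hS : S ⊆ P') :
    ZasCell (insert p0 P') S = ZasCell P' S ∩ {x | p0.1 x < p0.2} := by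
  have hp0S : p0 ∉ S := fun h => hp0 (hS h)
  ext x
  simp only [ZasCell, Set.mem_inter_iff, Set.mem_setOf_eq, Finset.mem_insert]
  constructor
  · intro h
    refine ⟨fun p hp => h p (Or.inr hp), ?_⟩
    have := h p0 (Or.inl rfl)
    rwa [if_neg hp0S] at this
  · rintro ⟨h1, h2⟩ p hp
    rcases hp with rfl | hp
    · rwa [if_neg hp0S]
    · exact h1 p hp

lemma Zas_cell_insert_gt (p0 : ZasPr n) (P' S : Finset (ZasPr n)) (hp0 : p0 ∉ P') (hS : S ⊆ P') :
    ZasCell (insert p0 P') (insert p0 S) = ZasCell P' S ∩ {x | p0.2 < p0.1 x} := by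
  ext x
  simp only [ZasCell, Set.mem_inter_iff, Set.mem_setOf_eq, Finset.mem_insert]
  constructor
  · intro h
    refine ⟨fun p hp => ?_, ?_⟩
    · have hne : ¬ p = p0 := fun hc => hp0 (hc ▸ hp)
      have hh := h p (Or.inr hp)
      by_cases hmem : p ∈ S
      · rw [if_pos (Or.inr hmem)] at hh; rwa [if_pos hmem]
      · rw [if_neg (by tauto)] at hh; rwa [if_neg hmem]
    · have hh := h p0 (Or.inl rfl)
      rwa [if_pos (Or.inl rfl)] at hh
  · rintro ⟨h1, h2⟩ p hp
    rcases hp with rfl | hp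
    · rwa [if_pos (Or.inl rfl)]
    · have hne : ¬ p = p0 := fun hc => hp0 (hc ▸ hp)
      have hh := h1 p hp
      by_cases hmem : p ∈ S
      · rw [if_pos hmem] at hh; rwa [if_pos (Or.inr hmem)]
      · rw [if_neg hmem] at hh; rwa [if_neg (by tauto)]

-- geometric lemma: both strict sides inhabited implies a point on the hyperplane
lemma Zas_ivt {P' S : Finset (ZasPr n)} {E : AffineSubspace ℝ (ZasV n)} {p0 : ZasPr n}
    {x y : ZasV n} (hx : x ∈ ZasCell P' S) (hxE : x ∈ E) (hy : y ∈ ZasCell P' S) (hyE : y ∈ E)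
    (hxlt : p0.1 x < p0.2) (hygt : p0.2 < p0.1 y) :
    ∃ z, z ∈ ZasCell P' S ∧ z ∈ E ∧ p0.1 z = p0.2 := by
  have hne : p0.1 y - p0.1 x ≠ 0 := by linarith
  set t : ℝ := (p0.2 - p0.1 x) / (p0.1 y - p0.1 x) with ht
  have ht0 : 0 < t := by apply div_pos <;> linarith
  have ht1 : t < 1 := by rw [div_lt_one (by linarith)]; linarith
  refine ⟨x + t • (y - x), ?_, ?_, ?_⟩
  · have := ZasCell_convex P' S hx hy (by linarith : (0:ℝ) ≤ 1 - t) (le_of_lt ht0)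
      (by ring : (1 - t) + t = 1)
    have heq : (1 - t) • x + t • y = x + t • (y - x) := by
      rw [smul_sub, sub_smul, one_smul]; abel
    rwa [heq] at this
  · have := E.smul_vsub_vadd_mem t hyE hxE hxE
    have heq : t • (y -ᵥ x) +ᵥ x = x + t • (y - x) := by
      rw [vsub_eq_sub, vadd_eq_add]; abel
    rwa [heq] at this
  · rw [map_add, map_smul, map_sub, smul_eq_mul, ht]
    field_simp
    ring

-- two-sided perturbation within E
lemma Zas_perturb_two {P' S : Finset (ZasPr n)} {E : AffineSubspace ℝ (ZasV n)} {x v : ZasV n}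
    (hxc : x ∈ ZasCell P' S) (hxE : x ∈ E) (hv : v ∈ E.direction) :
    ∃ ε : ℝ, 0 < ε ∧ (x + ε • v ∈ ZasCell P' S ∧ x + ε • v ∈ E) ∧
      (x - ε • v ∈ ZasCell P' S ∧ x - ε • v ∈ E) := by
  obtain ⟨ε, hε, hεmem⟩ := ZasCell_perturb hxc v
  have h1 : x + ε • v ∈ E := by
    have := AffineSubspace.vadd_mem_of_mem_direction (E.direction.smul_mem ε hv) hxE
    rwa [vadd_eq_add, add_comm] at this
  have h2 : x - ε • v ∈ E := by
    have := AffineSubspace.vadd_mem_of_mem_direction (E.direction.smul_mem (-ε) hv) hxE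
    rw [vadd_eq_add, add_comm, neg_smul, ← sub_eq_add_neg] at this
    exact this
  refine ⟨ε, hε, ⟨hεmem ε (by rw [abs_of_pos hε]), h1⟩, ⟨?_, h2⟩⟩
  have := hεmem (-ε) (by rw [abs_neg, abs_of_pos hε])
  rwa [neg_smul, ← sub_eq_add_neg] at this

lemma ZasR_cast (P : Finset (ZasPr n)) (E : Set (ZasV n)) :
    (ZasR P E : ℤ) = ∑ S ∈ P.powerset, if (ZasCell P S ∩ E).Nonempty then (1:ℤ) else 0 := by
  rw [ZasR, Finset.card_filter]
  push_cast
  rfl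

lemma Zas_key {P' S : Finset (ZasPr n)} {E : AffineSubspace ℝ (ZasV n)} {p0 : ZasPr n}
    (hboth : (ZasCell P' S ∩ ((E : Set (ZasV n)) ∩ ZasH p0)).Nonempty →
      ((ZasCell P' S ∩ {x | p0.1 x < p0.2}) ∩ (E : Set (ZasV n))).Nonempty ∧
      ((ZasCell P' S ∩ {x | p0.2 < p0.1 x}) ∩ (E : Set (ZasV n))).Nonempty) :
    ((if ((ZasCell P' S ∩ {x | p0.1 x < p0.2}) ∩ (E : Set (ZasV n))).Nonempty then (1:ℤ) else 0)
      + (if ((ZasCell P' S ∩ {x | p0.2 < p0.1 x}) ∩ (E : Set (ZasV n))).Nonempty then (1:ℤ) else 0))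
    = ((if (ZasCell P' S ∩ (E : Set (ZasV n))).Nonempty then (1:ℤ) else 0)
      + (if (ZasCell P' S ∩ ((E : Set (ZasV n)) ∩ ZasH p0)).Nonempty then (1:ℤ) else 0)) := by
  by_cases hH0 : (ZasCell P' S ∩ ((E : Set (ZasV n)) ∩ ZasH p0)).Nonempty
  · obtain ⟨h1, h2⟩ := hboth hH0
    rw [if_pos h1, if_pos h2, if_pos, if_pos hH0]
    obtain ⟨x, hxc, hxE⟩ := h1
    exact ⟨x, hxc.1, hxE⟩
  · rw [if_neg hH0, add_zero]
    by_cases hCE : (ZasCell P' S ∩ (E : Set (ZasV n))).Nonempty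
    · rw [if_pos hCE]
      obtain ⟨x, hxc, hxE⟩ := hCE
      have hxne : p0.1 x ≠ p0.2 := fun h => hH0 ⟨x, hxc, hxE, h⟩
      by_cases hlt : ((ZasCell P' S ∩ {x | p0.1 x < p0.2}) ∩ (E : Set (ZasV n))).Nonempty
      · have hgt' : ¬ ((ZasCell P' S ∩ {x | p0.2 < p0.1 x}) ∩ (E : Set (ZasV n))).Nonempty := by
          intro hgt
          obtain ⟨a, ⟨hac, halt⟩, haE⟩ := hlt
          obtain ⟨b, ⟨hbc, hbgt⟩, hbE⟩ := hgt
          obtain ⟨z, hzc, hzE, hz⟩ := Zas_ivt hac haE hbc hbE halt hbgt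
          exact hH0 ⟨z, hzc, hzE, hz⟩
        rw [if_pos hlt, if_neg hgt', add_zero]
      · rw [if_neg hlt, zero_add, if_pos]
        rcases hxne.lt_or_gt with h | h
        · exact absurd ⟨x, ⟨hxc, h⟩, hxE⟩ hlt
        · exact ⟨x, ⟨hxc, h⟩, hxE⟩
    · have e1 : ¬ ((ZasCell P' S ∩ {x | p0.1 x < p0.2}) ∩ (E : Set (ZasV n))).Nonempty := by
        rintro ⟨x, ⟨hxc, _⟩, hxE⟩; exact hCE ⟨x, hxc, hxE⟩
      have e2 : ¬ ((ZasCell P' S ∩ {x | p0.2 < p0.1 x}) ∩ (E : Set (ZasV n))).Nonempty := by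
        rintro ⟨x, ⟨hxc, _⟩, hxE⟩; exact hCE ⟨x, hxc, hxE⟩
      rw [if_neg e1, if_neg e2, if_neg hCE, add_zero]

lemma Zas_main (P : Finset (ZasPr n)) :
    ∀ (E : AffineSubspace ℝ (ZasV n)), ((E : Set (ZasV n))).Nonempty →
      (∀ p ∈ P, ¬ ((E : Set (ZasV n)) ⊆ ZasH p)) →
      (-1 : ℤ) ^ (Module.finrank ℝ E.direction) * (ZasR P (E : Set (ZasV n)) : ℤ) =
        ZasW P (E : Set (ZasV n)) := by
  induction P using Finset.induction_on with
  | empty =>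
    intro E hE _
    have hr : ZasR (∅ : Finset (ZasPr n)) (E : Set (ZasV n)) = 1 := by
      rw [ZasR, Finset.powerset_empty, Finset.filter_singleton, if_pos]
      · simp
      · obtain ⟨x, hx⟩ := hE
        exact ⟨x, by simp [ZasCell], hx⟩
    have hw : ZasW (∅ : Finset (ZasPr n)) (E : Set (ZasV n))
        = (-1) ^ (Module.finrank ℝ E.direction) := by
      rw [ZasW, Finset.powerset_empty, Finset.sum_singleton]
      have hI : ZasI (∅ : Finset (ZasPr n)) (E : Set (ZasV n)) = (E : Set (ZasV n)) := by
        simp [ZasI]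
      rw [hI, if_pos hE, ZasD_coe]
      simp
    rw [hr, hw]
    simp
  | @insert p0 P' hp0 IH =>
    intro E hE hEnot
    have hEnot' : ∀ p ∈ P', ¬ ((E : Set (ZasV n)) ⊆ ZasH p) :=
      fun p hp => hEnot p (Finset.mem_insert_of_mem hp)
    have hEnotp0 : ¬ ((E : Set (ZasV n)) ⊆ ZasH p0) := hEnot p0 (Finset.mem_insert_self _ _)
    set E' : AffineSubspace ℝ (ZasV n) := E ⊓ ZasHsub p0 with hE'def
    have hE'coe : (E' : Set (ZasV n)) = (E : Set (ZasV n)) ∩ ZasH p0 := by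
      ext x
      rw [hE'def]
      constructor
      · intro hx
        have h := (AffineSubspace.mem_inf_iff x E (ZasHsub p0)).1 hx
        refine ⟨h.1, ?_⟩
        rw [← ZasHsub_coe p0]
        exact h.2
      · rintro ⟨h1, h2⟩
        rw [← ZasHsub_coe p0] at h2
        exact (AffineSubspace.mem_inf_iff x E (ZasHsub p0)).2 ⟨h1, h2⟩
    -- the region count splits
    have hrP : (ZasR (insert p0 P') (E : Set (ZasV n)) : ℤ)
        = ∑ S ∈ P'.powerset,
            ((if ((ZasCell P' S ∩ {x | p0.1 x < p0.2}) ∩ (E : Set (ZasV n))).Nonempty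
                then (1:ℤ) else 0)
             + (if ((ZasCell P' S ∩ {x | p0.2 < p0.1 x}) ∩ (E : Set (ZasV n))).Nonempty
                then (1:ℤ) else 0)) := by
      rw [ZasR_cast, Finset.sum_powerset_insert hp0, ← Finset.sum_add_distrib]
      refine Finset.sum_congr rfl (fun S hS => ?_)
      rw [Zas_cell_insert_lt p0 P' S hp0 (Finset.mem_powerset.1 hS),
          Zas_cell_insert_gt p0 P' S hp0 (Finset.mem_powerset.1 hS)]
    -- the W sum splits
    have hIins : ∀ S : Finset (ZasPr n),
        ZasI (insert p0 S) (E : Set (ZasV n)) = ZasI S (E' : Set (ZasV n)) := by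
      intro S
      rw [ZasI, ZasI, hE'coe, Finset.set_biInter_insert]
      ext x
      simp only [Set.mem_inter_iff, Set.mem_iInter]
      tauto
    have hWP : ZasW (insert p0 P') (E : Set (ZasV n))
        = ZasW P' (E : Set (ZasV n)) - ZasW P' (E' : Set (ZasV n)) := by
      rw [ZasW, Finset.sum_powerset_insert hp0, sub_eq_add_neg]
      congr 1
      rw [ZasW, ← Finset.sum_neg_distrib]
      refine Finset.sum_congr rfl (fun S hS => ?_)
      have hp0S : p0 ∉ S := fun h => hp0 (Finset.mem_powerset.1 hS h)
      rw [hIins S, Finset.card_insert_of_notMem hp0S, pow_succ]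
      split_ifs
      · ring
      · ring
    rw [hrP, hWP]
    by_cases hE'ne : ((E' : Set (ZasV n))).Nonempty
    · -- Case B : E meets the hyperplane p0
      obtain ⟨x1, hx1⟩ := hE'ne
      have hx1E : x1 ∈ E := by
        have := hx1; rw [hE'coe] at this; rw [← AffineSubspace.mem_coe]; exact this.1
      have hx1H : x1 ∈ ZasHsub p0 := by
        have := hx1; rw [hE'coe] at this
        rw [← AffineSubspace.mem_coe, ZasHsub_coe]; exact this.2
      have hx1c : p0.1 x1 = p0.2 := by
        have := hx1; rw [hE'coe] at this; exact this.2
      obtain ⟨x2, hx2E, hx2H⟩ := Set.not_subset.1 hEnotp0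
      have hx2H' : p0.1 x2 ≠ p0.2 := hx2H
      set v : ZasV n := x2 - x1 with hvdef
      have hv : v ∈ E.direction := by
        have := AffineSubspace.vsub_mem_direction hx2E hx1E
        rwa [vsub_eq_sub] at this
      have hpv : p0.1 v ≠ 0 := by
        rw [hvdef, map_sub, hx1c, sub_ne_zero]
        exact hx2H'
      have hdim : Module.finrank ℝ E'.direction + 1 = Module.finrank ℝ E.direction :=
        ZasD_drop E p0 hx1E hx1H hx2E hx2H'
      -- both sides are inhabited near any point of a cell on the hyperplane
      have hboth : ∀ S : Finset (ZasPr n),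
          (ZasCell P' S ∩ ((E : Set (ZasV n)) ∩ ZasH p0)).Nonempty →
          ((ZasCell P' S ∩ {x | p0.1 x < p0.2}) ∩ (E : Set (ZasV n))).Nonempty ∧
          ((ZasCell P' S ∩ {x | p0.2 < p0.1 x}) ∩ (E : Set (ZasV n))).Nonempty := by
        rintro S ⟨x, hxc, hxE, hxH⟩
        obtain ⟨ε, hε, ⟨hpc, hpE⟩, ⟨hmc, hmE⟩⟩ := Zas_perturb_two hxc hxE hv
        have hxH' : p0.1 x = p0.2 := hxH
        have hvp : p0.1 (x + ε • v) = p0.2 + ε * p0.1 v := by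
          rw [map_add, map_smul, smul_eq_mul, hxH']
        have hvm : p0.1 (x - ε • v) = p0.2 - ε * p0.1 v := by
          rw [map_sub, map_smul, smul_eq_mul, hxH']
        rcases hpv.lt_or_gt with hneg | hpos
        · constructor
          · exact ⟨x + ε • v, ⟨hpc, by simp only [Set.mem_setOf_eq, hvp]; nlinarith⟩, hpE⟩
          · exact ⟨x - ε • v, ⟨hmc, by simp only [Set.mem_setOf_eq, hvm]; nlinarith⟩, hmE⟩
        · constructor
          · exact ⟨x - ε • v, ⟨hmc, by simp only [Set.mem_setOf_eq, hvm]; nlinarith⟩, hmE⟩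
          · exact ⟨x + ε • v, ⟨hpc, by simp only [Set.mem_setOf_eq, hvp]; nlinarith⟩, hpE⟩
      have hkey : ∑ S ∈ P'.powerset,
            ((if ((ZasCell P' S ∩ {x | p0.1 x < p0.2}) ∩ (E : Set (ZasV n))).Nonempty
                then (1:ℤ) else 0)
             + (if ((ZasCell P' S ∩ {x | p0.2 < p0.1 x}) ∩ (E : Set (ZasV n))).Nonempty
                then (1:ℤ) else 0))
          = (ZasR P' (E : Set (ZasV n)) : ℤ) + (ZasR P' (E' : Set (ZasV n)) : ℤ) := by
        rw [ZasR_cast, ZasR_cast, ← Finset.sum_add_distrib]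
        refine Finset.sum_congr rfl (fun S hS => ?_)
        rw [Zas_key (hboth S)]
        congr 2
        rw [hE'coe]
      rw [hkey]
      by_cases hbad : ∃ p ∈ P', (E' : Set (ZasV n)) ⊆ ZasH p
      · -- Subcase B1
        obtain ⟨p, hpP', hpE'⟩ := hbad
        have hr0 : ZasR P' (E' : Set (ZasV n)) = 0 := by
          rw [ZasR, Finset.card_eq_zero, Finset.filter_eq_empty_iff]
          rintro S hS ⟨x, hxc, hxE'⟩
          have hxH : p.1 x = p.2 := hpE' hxE'
          have := hxc p hpP'
          split_ifs at this <;> linarith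
        have hw0 : ZasW P' (E' : Set (ZasV n)) = 0 := by
          rw [ZasW]
          have hIeq : ∀ T : Finset (ZasPr n),
              ZasI (insert p T) (E' : Set (ZasV n)) = ZasI T (E' : Set (ZasV n)) := by
            intro T
            rw [ZasI, ZasI, Finset.set_biInter_insert]
            ext x
            simp only [Set.mem_inter_iff, Set.mem_iInter]
            constructor
            · rintro ⟨⟨_, h2⟩, h3⟩; exact ⟨h2, h3⟩
            · rintro ⟨h2, h3⟩; exact ⟨⟨hpE' h3, h2⟩, h3⟩
          refine Finset.sum_involution
            (fun S _ => if p ∈ S then S.erase p else insert p S) ?_ ?_ ?_ ?_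
          · intro S hS
            by_cases hpS : p ∈ S
            · simp only [if_pos hpS]
              have hSeq : S = insert p (S.erase p) := (Finset.insert_erase hpS).symm
              have hIe : ZasI S (E' : Set (ZasV n)) = ZasI (S.erase p) (E' : Set (ZasV n)) := by
                conv_lhs => rw [hSeq]
                exact hIeq _
              have hcard : S.card = (S.erase p).card + 1 := by
                conv_lhs => rw [hSeq]
                exact Finset.card_insert_of_notMem (Finset.notMem_erase p S)
              rw [hIe, hcard, pow_succ]
              split_ifs
              · ring
              · ring
            · simp only [if_neg hpS]
              rw [hIeq S, Finset.card_insert_of_notMem hpS, pow_succ]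
              split_ifs
              · ring
              · ring
          · intro S hS hne
            by_cases hpS : p ∈ S
            · simp only [if_pos hpS]
              intro hc
              rw [← hc] at hpS
              exact Finset.notMem_erase p S hpS
            · simp only [if_neg hpS]
              intro hc
              apply hpS
              rw [← hc]
              exact Finset.mem_insert_self p S
          · intro S hS
            by_cases hpS : p ∈ S
            · simp only [if_pos hpS, Finset.mem_powerset]
              exact (Finset.erase_subset p S).trans (Finset.mem_powerset.1 hS)
            · simp only [if_neg hpS, Finset.mem_powerset]
              exact Finset.insert_subset hpP' (Finset.mem_powerset.1 hS)
          · intro S hS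
            by_cases hpS : p ∈ S
            · have h1 : (if p ∈ S then S.erase p else insert p S) = S.erase p := if_pos hpS
              simp only [h1, if_neg (Finset.notMem_erase p S), Finset.insert_erase hpS]
            · have h1 : (if p ∈ S then S.erase p else insert p S) = insert p S := if_neg hpS
              simp only [h1, if_pos (Finset.mem_insert_self p S), Finset.erase_insert hpS]
        rw [hr0, hw0]
        push_cast
        rw [mul_add, IH E hE hEnot']
        ring
      · -- Subcase B2
        push_neg at hbad
        have hIH1 := IH E hE hEnot'
        have hE'ne' : ((E' : Set (ZasV n))).Nonempty := ⟨x1, hx1⟩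
        have hIH2 := IH E' hE'ne' hbad
        rw [mul_add, hIH1, ← hdim, pow_succ]
        rw [show ((-1:ℤ)^(Module.finrank ℝ E'.direction) * -1) * (ZasR P' (E':Set (ZasV n)) : ℤ)
            = -((-1:ℤ)^(Module.finrank ℝ E'.direction) * (ZasR P' (E':Set (ZasV n)) : ℤ)) by ring,
          hIH2]
        ring
    · -- Case A : E misses the hyperplane p0
      have hE'empty : (E' : Set (ZasV n)) = ∅ := Set.not_nonempty_iff_eq_empty.1 hE'ne
      have hEH : (E : Set (ZasV n)) ∩ ZasH p0 = ∅ := by rw [← hE'coe]; exact hE'empty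
      have hw0 : ZasW P' (E' : Set (ZasV n)) = 0 := by
        rw [ZasW]
        refine Finset.sum_eq_zero (fun S hS => ?_)
        rw [if_neg]
        rintro ⟨x, _, hxE'⟩
        rw [hE'empty] at hxE'
        exact hxE'
      have hkey : ∑ S ∈ P'.powerset,
            ((if ((ZasCell P' S ∩ {x | p0.1 x < p0.2}) ∩ (E : Set (ZasV n))).Nonempty
                then (1:ℤ) else 0)
             + (if ((ZasCell P' S ∩ {x | p0.2 < p0.1 x}) ∩ (E : Set (ZasV n))).Nonempty
                then (1:ℤ) else 0))
          = (ZasR P' (E : Set (ZasV n)) : ℤ) := by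
        rw [ZasR_cast]
        refine Finset.sum_congr rfl (fun S hS => ?_)
        have hboth : (ZasCell P' S ∩ ((E : Set (ZasV n)) ∩ ZasH p0)).Nonempty →
            ((ZasCell P' S ∩ {x | p0.1 x < p0.2}) ∩ (E : Set (ZasV n))).Nonempty ∧
            ((ZasCell P' S ∩ {x | p0.2 < p0.1 x}) ∩ (E : Set (ZasV n))).Nonempty := by
          rintro ⟨x, _, hxEH⟩
          rw [hEH] at hxEH
          exact absurd hxEH (Set.notMem_empty x)
        rw [Zas_key hboth]
        have h0 : ¬ (ZasCell P' S ∩ ((E : Set (ZasV n)) ∩ ZasH p0)).Nonempty := by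
          rintro ⟨x, _, hxEH⟩
          rw [hEH] at hxEH
          exact hxEH
        rw [if_neg h0, add_zero]
      rw [hkey, hw0, sub_zero]
      exact IH E hE hEnot'

lemma ZasCell_subset_compl (P S : Finset (ZasPr n)) (hS : S ⊆ P) :
    ZasCell P S ⊆ (⋃ p ∈ P, ZasH p)ᶜ := by
  intro x hx
  simp only [Set.mem_compl_iff, Set.mem_iUnion]
  rintro ⟨p, hp, hxH⟩
  have := hx p hp
  have hxH' : p.1 x = p.2 := hxH
  split_ifs at this <;> linarith

lemma Zas_components (P : Finset (ZasPr n)) :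
    Nat.card (ConnectedComponents ((⋃ p ∈ P, ZasH p)ᶜ : Set (ZasV n)))
      = ZasR P Set.univ := by
  set X : Set (ZasV n) := (⋃ p ∈ P, ZasH p)ᶜ with hX
  have hXmem : ∀ x : ZasV n, x ∈ X ↔ ∀ p ∈ P, p.1 x ≠ p.2 := by
    intro x
    simp only [hX, Set.mem_compl_iff, Set.mem_iUnion]
    constructor
    · intro h p hp hc
      exact h ⟨p, hp, hc⟩
    · rintro h ⟨p, hp, hc⟩
      exact h p hp hc
  set F : Finset (Finset (ZasPr n)) :=
    P.powerset.filter (fun S => (ZasCell P S ∩ Set.univ).Nonempty) with hF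
  -- preimages of cells in X
  have hpre_open : ∀ S : Finset (ZasPr n),
      IsOpen ((Subtype.val ⁻¹' (ZasCell P S)) : Set X) :=
    fun S => (ZasCell_isOpen P S).preimage continuous_subtype_val
  have hcover : ∀ y : X, (y : ZasV n) ∈ ZasCell P (P.filter (fun p => p.2 < p.1 (y : ZasV n))) :=
    fun y => ZasCell_mem_sign P _ ((hXmem _).1 y.2)
  have hdisj' : ∀ S T : Finset (ZasPr n), S ⊆ P → T ⊆ P → S ≠ T →
      ∀ z : ZasV n, z ∈ ZasCell P S → z ∈ ZasCell P T → False := by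
    intro S T hS hT hST z h1 h2
    have := ZasCell_disjoint hS hT hST
    rw [Set.eq_empty_iff_forall_notMem] at this
    exact this z ⟨h1, h2⟩
  have hpre_clopen : ∀ S ∈ P.powerset, IsClopen ((Subtype.val ⁻¹' (ZasCell P S)) : Set X) := by
    intro S hS
    refine ⟨?_, hpre_open S⟩
    rw [← isOpen_compl_iff]
    have hcompl : ((Subtype.val ⁻¹' (ZasCell P S)) : Set X)ᶜ
        = ⋃ T ∈ P.powerset.erase S, (Subtype.val ⁻¹' (ZasCell P T) : Set X) := by
      ext y
      simp only [Set.mem_compl_iff, Set.mem_preimage, Set.mem_iUnion]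
      constructor
      · intro hy
        set T := P.filter (fun p => p.2 < p.1 (y : ZasV n)) with hT
        refine ⟨T, ?_, hcover y⟩
        rw [Finset.mem_erase]
        refine ⟨?_, Finset.mem_powerset.2 (Finset.filter_subset _ _)⟩
        intro hc
        exact hy (hc ▸ hcover y)
      · rintro ⟨T, hT, hyT⟩ hyS
        rw [Finset.mem_erase, Finset.mem_powerset] at hT
        exact hdisj' S T (Finset.mem_powerset.1 hS) hT.2 (Ne.symm hT.1) _ hyS hyT
    rw [hcompl]
    exact isOpen_biUnion (fun T _ => hpre_open T)
  have hconn : ∀ S : Finset (ZasPr n), S ⊆ P →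
      IsPreconnected ((Subtype.val ⁻¹' (ZasCell P S)) : Set X) := by
    intro S hS
    rw [← Topology.IsInducing.subtypeVal.isPreconnected_image]
    rw [Subtype.image_preimage_coe]
    have : X ∩ ZasCell P S = ZasCell P S :=
      Set.inter_eq_self_of_subset_right (ZasCell_subset_compl P S hS)
    rw [this]
    exact (ZasCell_convex P S).isPreconnected
  have hsame : ∀ (S : Finset (ZasPr n)), S ⊆ P → ∀ (x y : X),
      (x : ZasV n) ∈ ZasCell P S → (y : ZasV n) ∈ ZasCell P S →
      (ConnectedComponents.mk x = ConnectedComponents.mk y) := by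
    intro S hS x y hx hy
    rw [ConnectedComponents.coe_eq_coe]
    have h1 : ((Subtype.val ⁻¹' (ZasCell P S)) : Set X) ⊆ connectedComponent x :=
      (hconn S hS).subset_connectedComponent hx
    exact connectedComponent_eq (h1 hy)
  -- the bijection
  have hchoose : ∀ S ∈ F, (ZasCell P S ∩ Set.univ).Nonempty := fun S hS =>
    (Finset.mem_filter.1 hS).2
  let f : {S // S ∈ F} → ConnectedComponents X := fun S =>
    ConnectedComponents.mk ⟨(hchoose S.1 S.2).some,
      ZasCell_subset_compl P S.1 (Finset.mem_powerset.1 (Finset.mem_filter.1 S.2).1)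
        (hchoose S.1 S.2).some_mem.1⟩
  have hfbij : Function.Bijective f := by
    constructor
    · rintro ⟨S, hS⟩ ⟨T, hT⟩ hfe
      have hSP : S ⊆ P := Finset.mem_powerset.1 (Finset.mem_filter.1 hS).1
      have hTP : T ⊆ P := Finset.mem_powerset.1 (Finset.mem_filter.1 hT).1
      simp only [f, ConnectedComponents.coe_eq_coe] at hfe
      by_contra hne
      have hne' : S ≠ T := fun h => hne (Subtype.ext h)
      -- the component of x_S is inside cell S
      have hxSmem : (⟨(hchoose S hS).some,
          ZasCell_subset_compl P S hSP (hchoose S hS).some_mem.1⟩ : X)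
          ∈ (Subtype.val ⁻¹' (ZasCell P S) : Set X) := (hchoose S hS).some_mem.1
      have hsubS := (hpre_clopen S (Finset.mem_filter.1 hS).1).connectedComponent_subset hxSmem
      rw [hfe] at hsubS
      have hxT := mem_connectedComponent (x := (⟨(hchoose T hT).some,
        ZasCell_subset_compl P T hTP (hchoose T hT).some_mem.1⟩ : X))
      have hmem := hsubS hxT
      exact hdisj' S T hSP hTP hne' _ hmem (hchoose T hT).some_mem.1
    · intro c
      obtain ⟨y, rfl⟩ := ConnectedComponents.surjective_coe c
      set S := P.filter (fun p => p.2 < p.1 (y : ZasV n)) with hSdef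
      have hSF : S ∈ F := by
        rw [hF, Finset.mem_filter, Finset.mem_powerset]
        exact ⟨Finset.filter_subset _ _, ⟨y, hcover y, trivial⟩⟩
      refine ⟨⟨S, hSF⟩, ?_⟩
      apply hsame S (Finset.filter_subset _ _)
      · exact (hchoose S hSF).some_mem.1
      · exact hcover y
  rw [← Nat.card_eq_of_bijective f hfbij, Nat.card_eq_finsetCard]
  rfl

/-- Zaslavsky's theorem: the number of regions (connected components of the complement
of the union of the hyperplanes) of a real arrangement `A` in an `n`-dimensional space
is `(-1)ⁿ χ_A(-1)`, where `χ_A(x) = Σ_{t ∈ L(A)} μ(0̂,t) x^{dim t}` is the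
characteristic polynomial.  The Möbius function `μ(0̂,·)` of the intersection poset is
characterized by the hypothesis `hmu`. -/
theorem zaslavsky_regions (n : ℕ) (A : Set (Set (Fin n → ℝ))) (hA : A.Finite)
    (hH : ∀ H ∈ A, IsHyperplane n H)
    (mu : Set (Fin n → ℝ) → ℤ)
    (hmu : ∀ t ∈ interPoset n A,
      (∑ᶠ s ∈ {s ∈ interPoset n A | t ⊆ s}, mu s) =
        if t = (Set.univ : Set (Fin n → ℝ)) then 1 else 0) :
    (Nat.card (ConnectedComponents ((⋃₀ A)ᶜ : Set (Fin n → ℝ))) : ℤ) =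
      (-1) ^ n * ∑ᶠ t ∈ interPoset n A, mu t * (-1) ^ (interDim n t) := by
  classical
  -- choose a defining pair for each hyperplane
  have hch : ∀ H : Set (ZasV n), H ∈ A → ∃ p : ZasPr n, p.1 ≠ 0 ∧ H = ZasH p := by
    intro H hHA
    obtain ⟨f, c, hf, hHeq⟩ := hH H hHA
    exact ⟨(f, c), hf, hHeq⟩
  choose! φ hφ0 hφ using hch
  set Af : Finset (Set (ZasV n)) := hA.toFinset with hAfdef
  have hAfco : (↑Af : Set (Set (ZasV n))) = A := hA.coe_toFinset
  have hmemAf : ∀ H, H ∈ Af ↔ H ∈ A := fun H => hA.mem_toFinset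
  set P : Finset (ZasPr n) := Af.image φ with hPdef
  have hPmem : ∀ p ∈ P, ∃ H ∈ A, p = φ H := by
    intro p hp
    obtain ⟨H, hHAf, rfl⟩ := Finset.mem_image.1 hp
    exact ⟨H, (hmemAf H).1 hHAf, rfl⟩
  have hPne : ∀ p ∈ P, ZasH p ≠ Set.univ := by
    intro p hp hc
    obtain ⟨H, hHA, rfl⟩ := hPmem p hp
    have hall : ∀ x : ZasV n, (φ H).1 x = (φ H).2 := by
      intro x
      have : x ∈ ZasH (φ H) := by rw [hc]; trivial
      exact this
    apply hφ0 H hHA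
    have h2 : (φ H).2 = 0 := by rw [← hall 0, map_zero]
    apply LinearMap.ext
    intro x
    rw [hall x, h2, LinearMap.zero_apply]
  -- intersections over images of subsets of Af
  have hbiInter : ∀ S : Finset (Set (ZasV n)), S ⊆ Af →
      (⋂ p ∈ S.image φ, ZasH p) = ⋂₀ (↑S : Set (Set (ZasV n))) := by
    intro S hS
    ext x
    rw [Set.mem_sInter]
    simp only [Set.mem_iInter, Finset.mem_image]
    constructor
    · intro h H hHS
      have hx : x ∈ ZasH (φ H) := h (φ H) ⟨H, Finset.mem_coe.1 hHS, rfl⟩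
      rwa [← hφ H ((hmemAf H).1 (hS (Finset.mem_coe.1 hHS)))] at hx
    · rintro h p ⟨H, hHS, rfl⟩
      rw [← hφ H ((hmemAf H).1 (hS hHS))]
      exact h H hHS
  -- the union
  have hUnion : ⋃₀ A = ⋃ p ∈ P, ZasH p := by
    ext x
    rw [Set.mem_sUnion]
    simp only [Set.mem_iUnion]
    constructor
    · rintro ⟨H, hHA, hx⟩
      refine ⟨φ H, Finset.mem_image_of_mem φ ((hmemAf H).2 hHA), ?_⟩
      rw [← hφ H hHA]
      exact hx
    · rintro ⟨p, hp, hx⟩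
      obtain ⟨H, hHA, rfl⟩ := hPmem p hp
      refine ⟨H, hHA, ?_⟩
      rw [hφ H hHA]
      exact hx
  -- the intersection poset as a Finset
  set key : Finset (ZasPr n) → Set (ZasV n) := fun S => ⋂ p ∈ S, ZasH p with hkeydef
  have hkeyapp : ∀ S : Finset (ZasPr n), key S = ⋂ p ∈ S, ZasH p := fun _ => rfl
  set Lf : Finset (Set (ZasV n)) :=
    (P.powerset.image key).filter (fun t => t.Nonempty) with hLfdef
  have hLfco : (↑Lf : Set (Set (ZasV n))) = interPoset n A := by
    ext t
    rw [Finset.mem_coe, hLfdef, Finset.mem_filter, Finset.mem_image]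
    constructor
    · rintro ⟨⟨S, hSpow, hSt⟩, htne⟩
      obtain ⟨S₀, hS₀, hS₀im⟩ := Finset.subset_image_iff.1 (Finset.mem_powerset.1 hSpow)
      refine ⟨htne, ↑S₀, ?_, ?_⟩
      · rw [← hAfco]
        exact Finset.coe_subset.2 hS₀
      · rw [← hSt, ← hS₀im, hkeyapp]
        exact hbiInter S₀ hS₀
    · rintro ⟨htne, S, hSA, rfl⟩
      have hSfin : S.Finite := hA.subset hSA
      have hS₀Af : hSfin.toFinset ⊆ Af := by
        intro H hH'
        exact (hmemAf H).2 (hSA (hSfin.mem_toFinset.1 hH'))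
      refine ⟨⟨hSfin.toFinset.image φ,
        Finset.mem_powerset.2 (Finset.image_subset_image hS₀Af), ?_⟩, htne⟩
      rw [hkeyapp, hbiInter hSfin.toFinset hS₀Af, hSfin.coe_toFinset]
  -- the combinatorial Möbius function
  set N : Set (ZasV n) → ℤ := fun t =>
    ∑ S ∈ P.powerset.filter (fun S => key S = t), (-1 : ℤ)^S.card with hNdef
  have hNsum : ∀ t ∈ Lf, (∑ s ∈ Lf.filter (fun s => t ⊆ s), N s)
      = (if t = Set.univ then (1:ℤ) else 0) := by
    intro t htLf
    have htne : t.Nonempty := (Finset.mem_filter.1 htLf).2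
    set B := P.powerset.filter (fun S => t ⊆ key S) with hBdef
    have hmaps : ∀ S ∈ B, key S ∈ Lf.filter (fun s => t ⊆ s) := by
      intro S hS
      rw [hBdef, Finset.mem_filter] at hS
      rw [Finset.mem_filter, hLfdef, Finset.mem_filter, Finset.mem_image]
      exact ⟨⟨⟨S, hS.1, rfl⟩, htne.mono hS.2⟩, hS.2⟩
    have hfib := Finset.sum_fiberwise_of_maps_to hmaps (fun S => (-1 : ℤ)^S.card)
    have hinner : ∀ s ∈ Lf.filter (fun s => t ⊆ s),
        (∑ S ∈ B.filter (fun S => key S = s), (-1:ℤ)^S.card) = N s := by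
      intro s hs
      rw [hNdef]
      congr 1
      ext S
      rw [hBdef]
      simp only [Finset.mem_filter]
      constructor
      · rintro ⟨⟨h1, _⟩, h3⟩
        exact ⟨h1, h3⟩
      · rintro ⟨h1, h3⟩
        refine ⟨⟨h1, ?_⟩, h3⟩
        rw [h3]
        exact (Finset.mem_filter.1 hs).2
    rw [← Finset.sum_congr rfl hinner, hfib]
    have hBpow : B = (P.filter (fun p => t ⊆ ZasH p)).powerset := by
      ext S
      rw [hBdef]
      simp only [Finset.mem_filter, Finset.mem_powerset]
      constructor
      · rintro ⟨hSP, hsub⟩ p hpS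
        exact Finset.mem_filter.2 ⟨hSP hpS,
          hsub.trans (by rw [hkeyapp]; exact Set.iInter₂_subset p hpS)⟩
      · intro h
        refine ⟨fun p hpS => (Finset.mem_filter.1 (h hpS)).1, ?_⟩
        rw [hkeyapp]
        exact Set.subset_iInter₂ (fun p hpS => (Finset.mem_filter.1 (h hpS)).2)
    rw [hBpow, Finset.sum_powerset_neg_one_pow_card]
    by_cases htu : t = Set.univ
    · rw [if_pos htu, if_pos]
      rw [Finset.filter_eq_empty_iff]
      intro p hp hsub
      apply hPne p hp
      apply Set.eq_univ_of_univ_subset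
      rw [← htu]
      exact hsub
    · rw [if_neg htu, if_neg]
      intro hempty
      have htmp := Finset.mem_filter.1 htLf
      obtain ⟨S, hSpow, hSt⟩ := Finset.mem_image.1 htmp.1
      have hSne : S ≠ ∅ := by
        rintro rfl
        apply htu
        rw [← hSt, hkeyapp]
        simp
      obtain ⟨p, hpS⟩ := Finset.nonempty_iff_ne_empty.2 hSne
      have hmemflt : p ∈ P.filter (fun p => t ⊆ ZasH p) :=
        Finset.mem_filter.2 ⟨Finset.mem_powerset.1 hSpow hpS,
          by rw [← hSt, hkeyapp]; exact Set.iInter₂_subset p hpS⟩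
      rw [hempty] at hmemflt
      exact absurd hmemflt (Finset.notMem_empty p)
  -- hmu in Finset form
  have hmusum : ∀ t ∈ Lf, (∑ s ∈ Lf.filter (fun s => t ⊆ s), mu s)
      = (if t = Set.univ then (1:ℤ) else 0) := by
    intro t ht
    have hseteq : {s | s ∈ interPoset n A ∧ t ⊆ s}
        = (↑(Lf.filter (fun s => t ⊆ s)) : Set (Set (ZasV n))) := by
      ext s
      rw [Set.mem_setOf_eq, Finset.mem_coe, Finset.mem_filter, ← hLfco, Finset.mem_coe]
    have := hmu t (by rw [← hLfco] at *; exact Finset.mem_coe.2 ht)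
    rw [show {s ∈ interPoset n A | t ⊆ s} = {s | s ∈ interPoset n A ∧ t ⊆ s} from rfl,
      hseteq, finsum_mem_coe_finset] at this
    exact this
  -- uniqueness of Möbius values
  have hdecomp : ∀ (f : Set (ZasV n) → ℤ) (t : Set (ZasV n)), t ∈ Lf →
      ∑ s ∈ Lf.filter (fun s => t ⊆ s), f s
        = f t + ∑ s ∈ Lf.filter (fun s => t ⊂ s), f s := by
    intro f t ht
    have hins : Lf.filter (fun s => t ⊆ s) = insert t (Lf.filter (fun s => t ⊂ s)) := by
      ext s
      simp only [Finset.mem_filter, Finset.mem_insert]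
      constructor
      · rintro ⟨hs, hsub⟩
        rcases eq_or_ne s t with rfl | hne
        · exact Or.inl rfl
        · exact Or.inr ⟨hs, ssubset_of_subset_of_ne hsub hne.symm⟩
      · rintro (rfl | ⟨hs, hss⟩)
        · exact ⟨ht, subset_rfl⟩
        · exact ⟨hs, hss.subset⟩
    rw [hins, Finset.sum_insert]
    simp only [Finset.mem_filter, not_and]
    intro _
    exact ssubset_irrefl t
  have huniq : ∀ k : ℕ, ∀ t ∈ Lf, (Lf.filter (fun s => t ⊂ s)).card ≤ k → mu t = N t := by
    intro k
    induction k with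
    | zero =>
      intro t ht hc
      have h0 : Lf.filter (fun s => t ⊂ s) = ∅ := Finset.card_eq_zero.1 (Nat.le_zero.1 hc)
      have h1 := hmusum t ht
      have h2 := hNsum t ht
      rw [hdecomp mu t ht, h0, Finset.sum_empty, add_zero] at h1
      rw [hdecomp N t ht, h0, Finset.sum_empty, add_zero] at h2
      rw [h1, h2]
    | succ k IH =>
      intro t ht hc
      have h1 := hmusum t ht
      have h2 := hNsum t ht
      rw [hdecomp mu t ht] at h1
      rw [hdecomp N t ht] at h2
      have hsum : ∑ s ∈ Lf.filter (fun s => t ⊂ s), mu s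
          = ∑ s ∈ Lf.filter (fun s => t ⊂ s), N s := by
        refine Finset.sum_congr rfl (fun s hs => ?_)
        obtain ⟨hsLf, hts⟩ := Finset.mem_filter.1 hs
        apply IH s hsLf
        have hlt : (Lf.filter (fun u => s ⊂ u)).card < (Lf.filter (fun u => t ⊂ u)).card := by
          apply Finset.card_lt_card
          rw [Finset.ssubset_iff_of_subset]
          · refine ⟨s, Finset.mem_filter.2 ⟨hsLf, hts⟩, ?_⟩
            simp only [Finset.mem_filter, not_and]
            intro _
            exact ssubset_irrefl s
          · intro u hu
            obtain ⟨h3, h4⟩ := Finset.mem_filter.1 hu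
            exact Finset.mem_filter.2 ⟨h3, hts.trans h4⟩
        omega
      linarith [h1, h2, hsum]
  have hmuN : ∀ t ∈ Lf, mu t = N t := fun t ht => huniq _ t ht le_rfl
  -- sum over Lf equals ZasW
  set Bne := P.powerset.filter (fun S => (key S).Nonempty) with hBnedef
  have hWeq : ZasW P Set.univ
      = ∑ S ∈ Bne, (-1:ℤ)^S.card * (-1)^(ZasD (key S)) := by
    rw [hBnedef, Finset.sum_filter, ZasW]
    refine Finset.sum_congr rfl (fun S _ => ?_)
    have hIu : ZasI S Set.univ = key S := by
      rw [ZasI, Set.inter_univ, hkeyapp]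
    rw [hIu]
  have hmapsne : ∀ S ∈ Bne, key S ∈ Lf := by
    intro S hS
    rw [hBnedef, Finset.mem_filter] at hS
    rw [hLfdef, Finset.mem_filter, Finset.mem_image]
    exact ⟨⟨S, hS.1, rfl⟩, hS.2⟩
  have hRHS : (∑ t ∈ Lf, mu t * (-1:ℤ)^(interDim n t)) = ZasW P Set.univ := by
    calc ∑ t ∈ Lf, mu t * (-1:ℤ)^(interDim n t)
        = ∑ t ∈ Lf, N t * (-1:ℤ)^(interDim n t) :=
          Finset.sum_congr rfl (fun t ht => by rw [hmuN t ht])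
      _ = ∑ t ∈ Lf, ∑ S ∈ Bne.filter (fun S => key S = t),
            (-1:ℤ)^S.card * (-1)^(ZasD (key S)) := by
          refine Finset.sum_congr rfl (fun t ht => ?_)
          rw [hNdef, Finset.sum_mul]
          have htne : t.Nonempty := (Finset.mem_filter.1 ht).2
          have hfeq : P.powerset.filter (fun S => key S = t)
              = Bne.filter (fun S => key S = t) := by
            ext S
            rw [hBnedef]
            simp only [Finset.mem_filter]
            constructor
            · rintro ⟨h1, h2⟩
              exact ⟨⟨h1, by rw [h2]; exact htne⟩, h2⟩
            · rintro ⟨⟨h1, _⟩, h2⟩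
              exact ⟨h1, h2⟩
          rw [hfeq]
          refine Finset.sum_congr rfl (fun S hS => ?_)
          have hkSt : key S = t := (Finset.mem_filter.1 hS).2
          rw [hkSt]
          rfl
      _ = ∑ S ∈ Bne, (-1:ℤ)^S.card * (-1)^(ZasD (key S)) :=
          Finset.sum_fiberwise_of_maps_to hmapsne _
      _ = ZasW P Set.univ := hWeq.symm
  -- put everything together
  have hfin : (∑ᶠ t ∈ interPoset n A, mu t * (-1:ℤ)^(interDim n t))
      = ∑ t ∈ Lf, mu t * (-1:ℤ)^(interDim n t) := by
    rw [← hLfco, finsum_mem_coe_finset]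
  rw [hfin, hRHS, hUnion, Zas_components P]
  -- apply the main lemma at ⊤
  have htopne : ((⊤ : AffineSubspace ℝ (ZasV n)) : Set (ZasV n)).Nonempty := by
    rw [AffineSubspace.top_coe]
    exact Set.univ_nonempty
  have htopnot : ∀ p ∈ P, ¬ (((⊤ : AffineSubspace ℝ (ZasV n)) : Set (ZasV n)) ⊆ ZasH p) := by
    intro p hp hc
    rw [AffineSubspace.top_coe] at hc
    exact hPne p hp (Set.eq_univ_of_univ_subset hc)
  have hmain := Zas_main P ⊤ htopne htopnot
  rw [AffineSubspace.top_coe] at hmain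
  have hdir : Module.finrank ℝ (⊤ : AffineSubspace ℝ (ZasV n)).direction = n := by
    rw [AffineSubspace.direction_top, finrank_top]
    exact Module.finrank_fin_fun ℝ
  rw [hdir] at hmain
  rw [← hmain, ← mul_assoc, ← pow_add]
  rw [Even.neg_one_pow ⟨n, rfl⟩, one_mul]
end
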